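/- Let k ≥ 3 be an integer and let t ∈ (0,1) satisfy t ≤ 0.4 and t ≥ max{ 3/k, (e/k)^{1/5}, (1 − 1/k)/(2·(log k − 1)), 2·log k/(5·(k − 2·log k + 1)) }. Define c_t = 5t/(log k − 1) − (2 + 5t)/(k·(log k − 1)). Then c_t > 0, and for every x ∈ [0,1] (with the convention 0·log 0 = 0): (x² − 1/k²)·1{x < t} ≤ 5t·(x − 1/k)·(1 − x) + c_t·( x·log x + (log k)/k ). -/

import Mathlib

set_option maxHeartbeats 1000000

open Real Set

-- log x ≥ 1 - 1/x for x > 0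
lemma aux_log_ge (x : ℝ) (hx : 0 < x) : 1 - 1/x ≤ Real.log x := by
  have h := Real.log_le_sub_one_of_pos (show (0:ℝ) < 1/x by positivity)
  rw [Real.log_div one_ne_zero (ne_of_gt hx), Real.log_one] at h
  linarith

-- Lem1 : 2 w log w ≤ w² - 1 for w ≥ 1
lemma aux_lem1 (w : ℝ) (hw : 1 ≤ w) : 2 * w * Real.log w ≤ w ^ 2 - 1 := by
  have key : MonotoneOn (fun s : ℝ => s ^ 2 - 1 - 2 * s * Real.log s) (Set.Icc 1 w) := by
    apply monotoneOn_of_hasDerivWithinAt_nonneg (convex_Icc 1 w)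
      (f' := fun s => 2 * s - 2 * Real.log s - 2)
    · apply ContinuousOn.sub
      · exact (continuousOn_pow 2).sub continuousOn_const
      · apply ContinuousOn.mul (by fun_prop)
        apply Real.continuousOn_log.mono
        intro s hs
        simp only [Set.mem_Icc] at hs
        simp only [Set.mem_compl_iff, Set.mem_singleton_iff]
        intro h; rw [h] at hs; linarith [hs.1]
    · intro s hs
      rw [interior_Icc] at hs
      have hs0 : (0:ℝ) < s := lt_of_lt_of_le one_pos (le_of_lt hs.1)
      have h1 : HasDerivAt (fun s : ℝ => s ^ 2 - 1 - 2 * s * Real.log s)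
          (2 * s - ((2:ℝ) * Real.log s + 2 * s * s⁻¹)) s := by
        have := ((hasDerivAt_pow 2 s).sub_const 1).sub
          (((hasDerivAt_id s).const_mul 2).mul (Real.hasDerivAt_log (ne_of_gt hs0)))
        exact this.congr_deriv (by simp)
      have h2 : 2 * s - ((2:ℝ) * Real.log s + 2 * s * s⁻¹) = 2 * s - 2 * Real.log s - 2 := by
        field_simp
        ring
      rw [h2] at h1
      exact h1.hasDerivWithinAt
    · intro s hs
      rw [interior_Icc] at hs
      have hs0 : (0:ℝ) < s := lt_of_lt_of_le one_pos (le_of_lt hs.1)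
      have := Real.log_le_sub_one_of_pos hs0
      linarith
  have h := key (Set.left_mem_Icc.2 hw) (Set.right_mem_Icc.2 hw) hw
  simp only [Real.log_one] at h
  nlinarith [h]

-- Lem2 : 2(v-1) ≤ (v+1) log v for v ≥ 1
lemma aux_lem2 (v : ℝ) (hv : 1 ≤ v) : 2 * (v - 1) ≤ (v + 1) * Real.log v := by
  have key : MonotoneOn (fun s : ℝ => (s + 1) * Real.log s - 2 * (s - 1)) (Set.Icc 1 v) := by
    apply monotoneOn_of_hasDerivWithinAt_nonneg (convex_Icc 1 v)
      (f' := fun s => Real.log s + (s + 1) * s⁻¹ - 2)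
    · apply ContinuousOn.sub
      · apply ContinuousOn.mul (by fun_prop)
        apply Real.continuousOn_log.mono
        intro s hs
        simp only [Set.mem_Icc] at hs
        simp only [Set.mem_compl_iff, Set.mem_singleton_iff]
        intro h; rw [h] at hs; linarith [hs.1]
      · fun_prop
    · intro s hs
      rw [interior_Icc] at hs
      have hs0 : (0:ℝ) < s := lt_of_lt_of_le one_pos (le_of_lt hs.1)
      have h1 : HasDerivAt (fun s : ℝ => (s + 1) * Real.log s - 2 * (s - 1))
          (1 * Real.log s + (s + 1) * s⁻¹ - 2 * 1) s := by
        exact (((hasDerivAt_id s).add_const 1).mul (Real.hasDerivAt_log (ne_of_gt hs0))).sub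
          (((hasDerivAt_id s).sub_const 1).const_mul 2)
      have h2 : 1 * Real.log s + (s + 1) * s⁻¹ - 2 * 1 = Real.log s + (s + 1) * s⁻¹ - 2 := by ring
      rw [h2] at h1
      exact h1.hasDerivWithinAt
    · intro s hs
      rw [interior_Icc] at hs
      have hs0 : (0:ℝ) < s := lt_of_lt_of_le one_pos (le_of_lt hs.1)
      have h := aux_log_ge s hs0
      have : (s + 1) * s⁻¹ = 1 + 1/s := by field_simp
      rw [this]
      linarith
  have h := key (Set.left_mem_Icc.2 hv) (Set.right_mem_Icc.2 hv) hv
  simp only [Real.log_one] at h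
  nlinarith [h]

-- phi lower bound for y ∈ [0,1]
lemma aux_phi_small (y : ℝ) (h0 : 0 ≤ y) (h1 : y ≤ 1) :
    (y - 1) ^ 2 / 2 ≤ y * Real.log y - y + 1 := by
  rcases eq_or_lt_of_le h0 with h | h
  · rw [← h]; simp [Real.log_zero]; norm_num
  · have key : AntitoneOn (fun s : ℝ => s * Real.log s - s + 1 - (s - 1) ^ 2 / 2) (Set.Icc y 1) := by
      apply antitoneOn_of_hasDerivWithinAt_nonpos (convex_Icc y 1)
        (f' := fun s => Real.log s + 1 - s)
      · apply ContinuousOn.sub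
        · apply ContinuousOn.add
          · apply ContinuousOn.sub
            · apply ContinuousOn.mul (by fun_prop)
              apply Real.continuousOn_log.mono
              intro s hs
              simp only [Set.mem_Icc] at hs
              simp only [Set.mem_compl_iff, Set.mem_singleton_iff]
              intro hh; rw [hh] at hs; linarith [hs.1]
            · fun_prop
          · fun_prop
        · fun_prop
      · intro s hs
        rw [interior_Icc] at hs
        have hs0 : (0:ℝ) < s := lt_of_lt_of_le h (le_of_lt hs.1)
        have h1' : HasDerivAt (fun s : ℝ => s * Real.log s - s + 1 - (s - 1) ^ 2 / 2)
            (Real.log s + 1 - s) s := by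
          have hd := ((((hasDerivAt_id s).mul (Real.hasDerivAt_log (ne_of_gt hs0))).sub
            (hasDerivAt_id s)).add_const 1).sub
            ((((hasDerivAt_id s).sub_const 1).pow 2).div_const 2)
          simp only [id_eq] at hd
          exact hd.congr_deriv (by field_simp [hs0.ne']; ring)
        exact h1'.hasDerivWithinAt
      · intro s hs
        rw [interior_Icc] at hs
        have hs0 : (0:ℝ) < s := lt_of_lt_of_le h (le_of_lt hs.1)
        have := Real.log_le_sub_one_of_pos hs0
        linarith
    have hkey := key (Set.left_mem_Icc.2 h1) (Set.right_mem_Icc.2 h1) h1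
    simp only [Real.log_one] at hkey
    nlinarith [hkey]

-- phi lower bound for y ≥ 1
lemma aux_phi_mid (y : ℝ) (hy : 1 ≤ y) :
    (y - 1) ^ 2 ≤ (y + 1) * (y * Real.log y - y + 1) := by
  have h := mul_le_mul_of_nonneg_left (aux_lem2 y hy) (le_trans zero_le_one hy)
  nlinarith [h]

-- concavity argument: H s = C*(s log s - s + 1) - β*(s-1)^2 is concave on [a,b] when C ≤ 2βa,
-- hence bounded below by min of endpoint values.
lemma aux_concave (C β a b : ℝ) (hC : 0 < C) (ha0 : 0 < a) (hab : a ≤ b) (hcurv : C ≤ 2 * β * a)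
    (hHa : β * (a - 1) ^ 2 ≤ C * (a * Real.log a - a + 1))
    (hHb : β * (b - 1) ^ 2 ≤ C * (b * Real.log b - b + 1))
    (y : ℝ) (hy1 : a ≤ y) (hy2 : y ≤ b) :
    β * (y - 1) ^ 2 ≤ C * (y * Real.log y - y + 1) := by
  have hβ : 0 < β := by nlinarith
  have hcon : ConcaveOn ℝ (Set.Icc a b)
      (fun s : ℝ => C * (s * Real.log s - s + 1) - β * (s - 1) ^ 2) := by
    apply concaveOn_of_hasDerivWithinAt2_nonpos (convex_Icc a b)
      (f' := fun s => C * Real.log s - β * (2 * (s - 1)))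
      (f'' := fun s => C * s⁻¹ - β * 2)
    · apply ContinuousOn.sub
      · apply ContinuousOn.mul continuousOn_const
        apply ContinuousOn.add
        · apply ContinuousOn.sub
          · apply ContinuousOn.mul (by fun_prop)
            apply Real.continuousOn_log.mono
            intro s hs
            simp only [Set.mem_Icc] at hs
            simp only [Set.mem_compl_iff, Set.mem_singleton_iff]
            intro hh; rw [hh] at hs; linarith [hs.1]
          · fun_prop
        · fun_prop
      · fun_prop
    · intro s hs
      have hs' : s ∈ Set.Ioo a b := by rwa [interior_Icc] at hs
      have hs0 : (0:ℝ) < s := lt_trans ha0 hs'.1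
      have hd : HasDerivAt (fun s : ℝ => C * (s * Real.log s - s + 1) - β * (s - 1) ^ 2)
          (C * Real.log s - β * (2 * (s - 1))) s := by
        have h1 := ((((hasDerivAt_id s).mul (Real.hasDerivAt_log (ne_of_gt hs0))).sub
          (hasDerivAt_id s)).add_const 1).const_mul C
        have h2 := (((hasDerivAt_id s).sub_const 1).pow 2).const_mul β
        have hd := h1.sub h2
        simp only [id_eq] at hd
        exact hd.congr_deriv (by field_simp [hs0.ne']; ring)
      exact hd.hasDerivWithinAt
    · intro s hs
      have hs' : s ∈ Set.Ioo a b := by rwa [interior_Icc] at hs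
      have hs0 : (0:ℝ) < s := lt_trans ha0 hs'.1
      have hd : HasDerivAt (fun s : ℝ => C * Real.log s - β * (2 * (s - 1)))
          (C * s⁻¹ - β * 2) s := by
        have h1 := (Real.hasDerivAt_log (ne_of_gt hs0)).const_mul C
        have h2 := (((hasDerivAt_id s).sub_const 1).const_mul (2:ℝ)).const_mul β
        have hd := h1.sub h2
        simp only [id_eq] at hd
        exact hd.congr_deriv (by simp)
      exact hd.hasDerivWithinAt
    · intro s hs
      have hs' : s ∈ Set.Ioo a b := by rwa [interior_Icc] at hs
      have hs0 : (0:ℝ) < s := lt_trans ha0 hs'.1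
      have h1 : C * s⁻¹ ≤ C * a⁻¹ := by
        apply mul_le_mul_of_nonneg_left _ (le_of_lt hC)
        exact inv_anti₀ ha0 (le_of_lt hs'.1)
      have h2 : C * a⁻¹ ≤ 2 * β := by
        rw [mul_inv_le_iff₀ ha0]
        linarith
      linarith
  -- now use concavity with endpoints
  rcases eq_or_lt_of_le hab with heq | hlt
  · have hya : y = a := le_antisymm (heq ▸ hy2) hy1
    rw [hya]; exact hHa
  · have hba : 0 < b - a := by linarith
    set lam := (b - y) / (b - a) with hlam
    set mu := (y - a) / (b - a) with hmu
    have hlam0 : 0 ≤ lam := by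
      apply div_nonneg _ (le_of_lt hba); linarith
    have hmu0 : 0 ≤ mu := by
      apply div_nonneg _ (le_of_lt hba); linarith
    have hsum : lam + mu = 1 := by
      rw [hlam, hmu, ← add_div, div_eq_one_iff_eq (ne_of_gt hba)]; ring
    have hcomb : lam * a + mu * b = y := by
      rw [hlam, hmu]; field_simp; ring
    have := hcon.2 (Set.left_mem_Icc.2 hab) (Set.right_mem_Icc.2 hab) hlam0 hmu0 hsum
    simp only [smul_eq_mul, hcomb] at this
    nlinarith [mul_le_mul_of_nonneg_left hHa hlam0, mul_le_mul_of_nonneg_left hHb hmu0]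

-- branch lemmas
lemma branch_lt (t K L c x : ℝ) (ht0 : 0 < t) (ht04 : t ≤ 0.4)
    (hK0 : 0 < K) (hY106 : (106:ℝ) ≤ t*K) (hC6 : (6:ℝ) ≤ c*K) (hc0 : 0 < c)
    (hcdef : c * (L - 1) = 5*t - (2+5*t)/K)
    (hcK : (c * K) * (L - 1) = 5*(t*K) - 2 - 5*t)
    (hlogt : (1 - L)/5 ≤ Real.log t) (hLdef : L = Real.log K)
    (hx0 : 0 ≤ x) (hxt : x < t) :
    x^2 - 1/K^2 ≤ 5*t*(x - 1/K)*(1-x) + c*(x*Real.log x + L/K) := by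
  have hKne : K ≠ 0 := ne_of_gt hK0
  have hCK0 : (0:ℝ) < c*K := mul_pos hc0 hK0
  have htK0 : (0:ℝ) ≤ t*K := mul_nonneg ht0.le hK0.le
  have h5t1 : (0:ℝ) < 5*t+1 := by linarith
  have hlogid2 : (K*x)*Real.log (K*x) = K*(x*Real.log x) + L*(K*x) := by
    rcases eq_or_lt_of_le hx0 with h0 | h0
    · rw [← h0]; simp
    · rw [Real.log_mul hKne (ne_of_gt h0), hLdef]; ring
  have hkey : (5*t+1)*(K*x-1)^2 ≤ (c*K) * ((K*x)*Real.log (K*x) - K*x + 1) := by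
    obtain ⟨y, hyd⟩ : ∃ y : ℝ, y = K*x := ⟨_, rfl⟩
    rw [← hyd]
    have hy0 : 0 ≤ y := by rw [hyd]; exact mul_nonneg hK0.le hx0
    have hyY : y ≤ t*K := by
      have h := mul_le_mul_of_nonneg_left hxt.le hK0.le
      rw [hyd]; linarith [h]
    rcases le_or_gt y 1 with hy1 | hy1
    · have hps := aux_phi_small y hy0 hy1
      have h1 := mul_le_mul_of_nonneg_left hps hCK0.le
      have h2 : 0 ≤ (c*K/2 - (5*t+1)) * (y-1)^2 :=
        mul_nonneg (by linarith) (sq_nonneg _)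
      nlinarith [h1, h2]
    · rcases le_or_gt ((5*t+1)*(y+1)) (c*K) with hmid | hmid
      · have hpm := aux_phi_mid y hy1.le
        have hphp : 0 ≤ y*Real.log y - y + 1 := by nlinarith [hpm, hy1, sq_nonneg (y-1)]
        have h1 := mul_le_mul_of_nonneg_left hpm h5t1.le
        have h2 := mul_le_mul_of_nonneg_right hmid hphp
        nlinarith [h1, h2]
      · -- concavity region
        obtain ⟨a, ha⟩ : ∃ a : ℝ, a = (c*K)/(5*t+1) - 1 := ⟨_, rfl⟩
        have h2C : 2*(5*t+1) ≤ c*K := by linarith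
        have ha1 : (1:ℝ) ≤ a := by
          rw [ha, le_sub_iff_add_le, show (1:ℝ)+1 = 2 by norm_num, le_div_iff₀ h5t1]
          linarith
        have haCurve : c*K ≤ 2*(5*t+1)*a := by
          have e : 2*(5*t+1)*((c*K)/(5*t+1) - 1) = 2*(c*K) - 2*(5*t+1) := by
            field_simp
          rw [ha, e]; linarith
        have hay : a ≤ y := by
          rw [ha, sub_le_iff_le_add, div_le_iff₀ h5t1]
          nlinarith [hmid]
        have haY : a ≤ t*K := le_trans hay hyY
        have hHa : (5*t+1)*(a-1)^2 ≤ (c*K)*(a*Real.log a - a + 1) := by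
          have hpm := aux_phi_mid a ha1
          have hCa : c*K = (5*t+1)*(a+1) := by
            rw [ha]; field_simp; ring
          rw [hCa]
          nlinarith [mul_le_mul_of_nonneg_left hpm h5t1.le]
        have hHb : (5*t+1)*(t*K-1)^2 ≤ (c*K)*((t*K)*Real.log (t*K) - (t*K) + 1) := by
          have hlogY : (4*L+1)/5 ≤ Real.log (t*K) := by
            rw [Real.log_mul (ne_of_gt ht0) hKne, ← hLdef]
            linarith [hlogt]
          have hphiY : (4*(t*K)*(L-1))/5 ≤ (t*K)*Real.log (t*K) - t*K + 1 := by
            have h := mul_le_mul_of_nonneg_left hlogY htK0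
            linarith [h]
          have h1 := mul_le_mul_of_nonneg_left hphiY hCK0.le
          have h2 : (c*K)*((4*(t*K)*(L-1))/5) = (4*(t*K)/5)*(5*(t*K)-2-5*t) := by
            linear_combination (4*(t*K)/5) * hcK
          have h3 : (5*t+1)*(t*K-1)^2 ≤ (4*(t*K)/5)*(5*(t*K)-2-5*t) := by
            nlinarith [mul_le_mul_of_nonneg_right ht04 htK0,
              mul_nonneg (by linarith : (0:ℝ) ≤ t*K - 106) htK0,
              mul_nonneg (by linarith : (0:ℝ) ≤ 2-5*t) (sq_nonneg (t*K-1))]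
          linarith [h1, h2, h3]
        exact aux_concave (c*K) (5*t+1) a (t*K) hCK0 (by linarith) haY haCurve hHa hHb
          y hay hyY
  have key_x : (5*t+1)*(x - 1/K)^2 ≤ c * (x*Real.log x + L*x - x + 1/K) := by
    have hK2 : (0:ℝ) < K^2 := by positivity
    have hone : K * (1/K) = 1 := by field_simp
    have hmul : K*(x*Real.log x + L*x - x + 1/K) = (K*x)*Real.log (K*x) - K*x + 1 := by
      rw [hlogid2]
      have : K*(x*Real.log x + L*x - x + 1/K)
          = K*(x*Real.log x) + L*(K*x) - K*x + K*(1/K) := by ring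
      rw [this, hone]
    have hsq : (K*x-1)^2 = K^2*(x - 1/K)^2 := by
      have : K*x - 1 = K*(x - 1/K) := by rw [mul_sub, hone]
      rw [this]; ring
    have h3 : K^2*((5*t+1)*(x - 1/K)^2) ≤ K^2*(c*(x*Real.log x + L*x - x + 1/K)) := by
      calc K^2*((5*t+1)*(x - 1/K)^2) = (5*t+1)*(K*x-1)^2 := by rw [hsq]; ring
        _ ≤ (c*K) * ((K*x)*Real.log (K*x) - K*x + 1) := hkey
        _ = K^2*(c*(x*Real.log x + L*x - x + 1/K)) := by rw [← hmul]; ring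
    exact le_of_mul_le_mul_left h3 hK2
  have hz : (5*t - (2+5*t)/K) - c*(L-1) = 0 := by linarith [hcdef]
  have heq : 5*t*(x - 1/K)*(1-x) + c*(x*Real.log x + L/K) - (x^2 - 1/K^2)
      = c*(x*Real.log x + L*x - x + 1/K) - (5*t+1)*(x - 1/K)^2
        + (x - 1/K)*((5*t - (2+5*t)/K) - c*(L-1)) := by ring
  rw [hz, mul_zero, add_zero] at heq
  linarith [key_x, heq]

lemma branch_ge (t K L c x : ℝ) (ht0 : 0 < t) (ht04 : t ≤ 0.4)
    (hK0 : 0 < K) (hK265 : (265:ℝ) ≤ K) (hL1 : (4:ℝ) ≤ L - 1) (hLK : L - 1 ≤ K)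
    (hlogt : (1 - L)/5 ≤ Real.log t)
    (hc : c = 5 * t / (L - 1) - (2 + 5 * t) / (K * (L - 1)))
    (hcdef : c * (L - 1) = 5*t - (2+5*t)/K) (hc0 : 0 < c)
    (h1Kt : 1/K ≤ t/3)
    (hx0 : 0 ≤ x) (hx1 : x ≤ 1) (hxt : t ≤ x) :
    0 ≤ 5*t*(x - 1/K)*(1-x) + c*(x*Real.log x + L/K) := by
  have hxpos : 0 < x := lt_of_lt_of_le ht0 hxt
  have hL1pos : (0:ℝ) < L - 1 := by linarith
  have hcLK : 0 ≤ c * (L/K) := by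
    apply mul_nonneg hc0.le (div_nonneg (by linarith) hK0.le)
  by_cases hsplit : x ≤ 1/K + 1/(L-1)
  · -- middle region: tangent slope from t
    have hlx : (1-L)/5 ≤ Real.log x := le_trans hlogt (Real.log_le_log ht0 hxt)
    have hA2 : x*((1-L)/5) ≤ x*Real.log x := mul_le_mul_of_nonneg_left hlx hx0
    have hstep1 : c*(x*((1-L)/5)) ≤ c*(x*Real.log x) := mul_le_mul_of_nonneg_left hA2 hc0.le
    have e : c*(x*((1-L)/5)) + t*x = x*((2+5*t)/K)/5 := by
      linear_combination (-(x)/5) * hcdef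
    have hpos : 0 ≤ x*((2+5*t)/K)/5 := by positivity
    have hq : 0 ≤ 5*(x - 1/K)*(1-x) - x := by
      have hqt : t ≤ 5*(t - 1/K)*(1-t) - t := by
        have hm := mul_le_mul (show 2*t/3 ≤ t - 1/K by linarith)
          (show 3/5 ≤ 1-t by linarith) (by norm_num) (by linarith)
        nlinarith [hm]
      have hu0 : (0:ℝ) < 1/(L-1) := by positivity
      have hu14 : 1/(L-1) ≤ 1/4 := by
        rw [div_le_div_iff₀ hL1pos (by norm_num)]; linarith
      have hv : 1/K ≤ 1/265 := by
        rw [div_le_div_iff₀ hK0 (by norm_num)]; linarith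
      have hvu : 1/K ≤ 1/(L-1) := one_div_le_one_div_of_le hL1pos hLK
      have hqx0 : 0 ≤ 5*((1/K + 1/(L-1)) - 1/K)*(1-(1/K + 1/(L-1))) - (1/K + 1/(L-1)) := by
        nlinarith [mul_nonneg hu0.le (sub_nonneg.2 hu14),
          mul_nonneg hu0.le (sub_nonneg.2 hv), hvu]
      obtain ⟨b, hb⟩ : ∃ b : ℝ, b = 1/K + 1/(L-1) := ⟨_, rfl⟩
      rw [← hb] at hsplit hqx0
      have hbt : t ≤ b := le_trans hxt hsplit
      rcases eq_or_lt_of_le hbt with hbeq | hblt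
      · have hxeq : x = t := le_antisymm (by rw [hbeq]; exact hsplit) hxt
        rw [hxeq]; linarith [hqt]
      · have p1 : 0 ≤ (b - x)*(5*(t - 1/K)*(1-t) - t) :=
          mul_nonneg (by linarith) (by linarith)
        have p2 : 0 ≤ (x - t)*(5*(b - 1/K)*(1-b) - b) :=
          mul_nonneg (by linarith) hqx0
        have p3 : 0 ≤ (x - t)*(b - x)*(b - t) :=
          mul_nonneg (mul_nonneg (by linarith) (by linarith)) (by linarith)
        have hID : (b - t)*(5*(x-1/K)*(1-x) - x)
            = (b - x)*(5*(t - 1/K)*(1-t) - t) + (x - t)*(5*(b - 1/K)*(1-b) - b)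
              + 5*((x - t)*(b - x)*(b - t)) := by ring
        have h9 : 0 ≤ (b - t)*(5*(x-1/K)*(1-x) - x) := by
          rw [hID]; linarith
        exact (mul_nonneg_iff_of_pos_left (by linarith : (0:ℝ) < b - t)).mp h9
    have hfin : 5*t*(x-1/K)*(1-x) + c*(x*Real.log x + L/K)
        = t*(5*(x-1/K)*(1-x) - x) + (c*(x*Real.log x) - c*(x*((1-L)/5)))
          + (c*(x*((1-L)/5)) + t*x) + c*(L/K) := by ring
    rw [hfin]
    linarith [mul_nonneg ht0.le hq, hstep1, e, hpos, hcLK]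
  · -- outer region: x log x ≥ x - 1
    push_neg at hsplit
    have hA1 : x - 1 ≤ x * Real.log x := by
      have h := mul_le_mul_of_nonneg_left (aux_log_ge x hxpos) hx0
      have e : x*(1 - 1/x) = x - 1 := by field_simp
      rw [e] at h; exact h
    have hc5t : c ≤ 5*t*(x - 1/K) := by
      have h1 : c ≤ 5*t/(L-1) := by
        rw [hc]
        have : 0 ≤ (2+5*t)/(K*(L-1)) := by positivity
        linarith
      have h3 : 5*t*(1/(L-1)) ≤ 5*t*(x - 1/K) := by
        apply mul_le_mul_of_nonneg_left _ (by linarith : (0:ℝ) ≤ 5*t)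
        linarith
      have h2 : 5*t/(L-1) = 5*t*(1/(L-1)) := by ring
      linarith
    have hprod : 0 ≤ (1-x)*(5*t*(x-1/K) - c) := mul_nonneg (by linarith) (by linarith)
    have hfin2 : 5*t*(x-1/K)*(1-x) + c*(x*Real.log x + L/K)
        = (1-x)*(5*t*(x-1/K) - c) + (c*(x*Real.log x) - c*(x-1)) + c*(L/K) := by ring
    rw [hfin2]
    linarith [hprod, mul_le_mul_of_nonneg_left hA1 hc0.le, hcLK]

theorem truncated_quadratic_bound (k : ℕ) (hk : 3 ≤ k) (t : ℝ)
    (ht0 : 0 < t) (ht1 : t < 1) (ht04 : t ≤ 0.4)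
    (ht2 : 3 / (k : ℝ) ≤ t)
    (ht3 : (Real.exp 1 / (k : ℝ)) ^ ((1 : ℝ) / 5) ≤ t)
    (ht4 : (1 - 1 / (k : ℝ)) / (2 * (Real.log k - 1)) ≤ t)
    (ht5 : 2 * Real.log k / (5 * ((k : ℝ) - 2 * Real.log k + 1)) ≤ t) :
    (0 < 5 * t / (Real.log k - 1) - (2 + 5 * t) / (k * (Real.log k - 1))) ∧
    ∀ x : ℝ, 0 ≤ x → x ≤ 1 →
      (x ^ 2 - 1 / (k : ℝ) ^ 2) * (if x < t then 1 else 0) ≤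
        5 * t * (x - 1 / k) * (1 - x) +
          (5 * t / (Real.log k - 1) - (2 + 5 * t) / (k * (Real.log k - 1))) *
            (x * Real.log x + Real.log k / k) := by
  have hkk : (3:ℝ) ≤ (k:ℝ) := by exact_mod_cast hk
  set K : ℝ := (k:ℝ) with hKdef
  set L : ℝ := Real.log K with hLdef
  have hK0 : (0:ℝ) < K := by linarith
  -- t^5 * K ≥ e
  have hEK : Real.exp 1 ≤ t ^ 5 * K := by
    have h0 : (0:ℝ) ≤ Real.exp 1 / K := by positivity
    have h1 := pow_le_pow_left₀ (Real.rpow_nonneg h0 _) ht3 5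
    have h2 : ((Real.exp 1 / K) ^ ((1:ℝ)/5)) ^ (5:ℕ) = Real.exp 1 / K := by
      rw [← Real.rpow_natCast ((Real.exp 1 / K) ^ ((1:ℝ)/5)) 5, ← Real.rpow_mul h0]
      norm_num
    rw [h2] at h1
    rw [div_le_iff₀ hK0] at h1
    linarith
  have he1 : (2.718:ℝ) ≤ Real.exp 1 := by
    have := Real.exp_one_gt_d9
    linarith
  -- K ≥ 265
  have hK265 : (265:ℝ) ≤ K := by
    have h1 : t ^ 5 ≤ 0.4 ^ 5 := pow_le_pow_left₀ ht0.le ht04 5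
    have h2 : t ^ 5 * K ≤ 0.4 ^ 5 * K := by
      apply mul_le_mul_of_nonneg_right h1 hK0.le
    nlinarith
  -- L ≥ 5
  have hL5 : (5:ℝ) ≤ L := by
    rw [hLdef, Real.le_log_iff_exp_le hK0]
    have h1 : Real.exp (5:ℝ) = Real.exp 1 ^ (5:ℕ) := by
      rw [← Real.exp_nat_mul]; norm_num
    have h2 : Real.exp 1 ^ (5:ℕ) ≤ 2.7182818286 ^ (5:ℕ) :=
      pow_le_pow_left₀ (Real.exp_pos 1).le Real.exp_one_lt_d9.le 5
    rw [h1]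
    calc Real.exp 1 ^ (5:ℕ) ≤ 2.7182818286 ^ (5:ℕ) := h2
      _ ≤ 265 := by norm_num
      _ ≤ K := hK265
  have hL1 : (4:ℝ) ≤ L - 1 := by linarith
  have hLK : L - 1 ≤ K := by
    have := Real.log_le_sub_one_of_pos hK0
    rw [← hLdef] at this
    linarith
  -- log t ≥ (1-L)/5
  have hlogt : (1 - L)/5 ≤ Real.log t := by
    have h0 : (0:ℝ) < Real.exp 1 / K := by positivity
    have h1 := Real.log_le_log (Real.rpow_pos_of_pos h0 _) ht3
    rw [Real.log_rpow h0, Real.log_div (Real.exp_ne_zero 1) (ne_of_gt hK0), Real.log_exp,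
      ← hLdef] at h1
    linarith
  -- Y = t*K ≥ 106
  have hY106 : (106:ℝ) ≤ t * K := by
    have h1 : t ^ 4 ≤ 0.4 ^ 4 := pow_le_pow_left₀ ht0.le ht04 4
    have h2 : t * K * t ^ 4 = t ^ 5 * K := by ring
    have h3 : t * K * t ^ 4 ≤ t * K * 0.4 ^ 4 :=
      mul_le_mul_of_nonneg_left h1 (by positivity)
    nlinarith
  have h1Kt : 1/K ≤ t/3 := by
    have : 1/K = (3/K)/3 := by ring
    rw [this]
    linarith
  set c : ℝ := 5 * t / (L - 1) - (2 + 5 * t) / (K * (L - 1)) with hc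
  have hL1ne : L - 1 ≠ 0 := by linarith
  have hKne : K ≠ 0 := ne_of_gt hK0
  have hcdef : c * (L - 1) = 5*t - (2+5*t)/K := by
    rw [hc]; field_simp
  have hcK : (c * K) * (L - 1) = 5*(t*K) - 2 - 5*t := by
    rw [hc]; field_simp; ring
  -- 6L ≤ 5tK
  have h6L : 6 * L ≤ 5 * (t * K) := by
    set R : ℝ := K ^ ((2:ℝ)/5) with hR
    have hR0 : 0 ≤ R := Real.rpow_nonneg hK0.le _
    have hR5 : R ^ (5:ℕ) = K ^ 2 := by
      rw [hR, ← Real.rpow_natCast (K ^ ((2:ℝ)/5)) 5, ← Real.rpow_mul hK0.le,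
        show ((2:ℝ)/5 * (5:ℕ)) = ((2:ℕ):ℝ) by norm_num, Real.rpow_natCast]
    have hlogR : L ≤ (5/2) * R := by
      have := Real.log_le_rpow_div hK0.le (show (0:ℝ) < 2/5 by norm_num)
      rw [← hLdef, ← hR] at this
      linarith
    have h3R : 3 * R ≤ t * K := by
      apply le_of_pow_le_pow_left₀ (show (5:ℕ) ≠ 0 by norm_num) (by positivity)
      have e1 : (3 * R) ^ (5:ℕ) = 243 * (R ^ (5:ℕ)) := by ring
      have e2 : (t * K) ^ (5:ℕ) = (t ^ 5 * K) * K ^ 4 := by ring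
      rw [e1, e2, hR5]
      have h4 : 90 * K ^ 2 ≤ K ^ 4 := by
        nlinarith [sq_nonneg (K^2-90), sq_nonneg (K-265), hK265]
      have h5 : 2.718 * K ^ 4 ≤ (t^5*K) * K^4 :=
        mul_le_mul_of_nonneg_right (le_trans he1 hEK) (by positivity)
      nlinarith [h4, h5]
    linarith
  have hC6 : (6:ℝ) ≤ c * K := by
    nlinarith [hcK, h6L, ht04, ht0, hL1]
  have hc0 : (0:ℝ) < c := by nlinarith [hC6, hK0]
  clear_value K L c
  clear ht4 ht5 ht2 ht3 hk hKdef
  refine ⟨hc0, ?_⟩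
  intro x hx0 hx1
  by_cases hxt : x < t
  · rw [if_pos hxt, mul_one]
    exact branch_lt t K L c x ht0 ht04 hK0 hY106 hC6 hc0 hcdef hcK hlogt hLdef hx0 hxt
  · rw [if_neg hxt, mul_zero]
    push_neg at hxt
    exact branch_ge t K L c x ht0 ht04 hK0 hK265 hL1 hLK hlogt hc hcdef hc0 h1Kt hx0 hx1 hxt
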